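/- Let F be a field, V an F-vector space of dimension N > 1, 𝔤 = End_F(V), and γ ∈ Aut_F(V) a quasi-regular element, i.e., the centralizer 𝔤_γ equals F[γ] and has dimension N over F. Then det_F(−ad_γ ; 𝔤/𝔤_γ) = det(γ)^{N−1} · det_F(1 − Ad_γ ; 𝔤/𝔤_γ), where ad_γ(x) = γx − xγ, Ad_γ(x) = γxγ^{−1}, and det(γ) = det_F(v ↦ γv; V). -/

import Mathlib

section Aux

open Module Matrix Kronecker Polynomial

private lemma det_restrict_mul_det_mapQ'
    {F M : Type*} [Field F] [AddCommGroup M] [Module F M] [FiniteDimensional F M]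
    (p : Submodule F M) (f : M →ₗ[F] M) (h : ∀ x ∈ p, f x ∈ p) :
    LinearMap.det f
      = LinearMap.det (f.restrict h)
        * LinearMap.det (Submodule.mapQ p p f (fun x hx => h x hx)) := by
  classical
  obtain ⟨q, hq⟩ := Submodule.exists_isCompl p
  let bp := finBasis F p
  let bq := finBasis F q
  let e := Submodule.prodEquivOfIsCompl p q hq
  let b : Basis (Fin (finrank F p) ⊕ Fin (finrank F q)) F M := (bp.prod bq).map e
  let e' := Submodule.quotientEquivOfIsCompl p q hq
  set g : q →ₗ[F] q :=
    (e' : (M ⧸ p) →ₗ[F] q) ∘ₗ (Submodule.mapQ p p f (fun x hx => h x hx)) ∘ₗ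
      (e'.symm : q →ₗ[F] M ⧸ p) with hg
  have hdetg : LinearMap.det g = LinearMap.det (Submodule.mapQ p p f (fun x hx => h x hx)) :=
    LinearMap.det_conj _ e'
  have hrepr : ∀ (x : M) i, b.repr x i
      = Sum.elim (fun i => bp.repr (e.symm x).1 i) (fun i => bq.repr (e.symm x).2 i) i := by
    intro x i
    cases i with
    | inl i => simp [b, Basis.map_repr, Basis.prod_repr_inl]
    | inr i => simp [b, Basis.map_repr, Basis.prod_repr_inr]
  have hbl : ∀ j, b (Sum.inl j) = (bp j : M) := by
    intro j; simp [b, e, Basis.prod_apply]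
  have hbr : ∀ j, b (Sum.inr j) = (bq j : M) := by
    intro j; simp [b, e, Basis.prod_apply]
  have hsym : ∀ j, e.symm (f (bp j : M)) = (⟨f (bp j : M), h _ (bp j).2⟩, 0) := by
    intro j
    apply e.symm_apply_eq.2
    simp [e, Submodule.coe_prodEquivOfIsCompl']
  have h11 : (LinearMap.toMatrix b b f).toBlocks₁₁
      = LinearMap.toMatrix bp bp (f.restrict h) := by
    ext i j
    simp only [Matrix.toBlocks₁₁, LinearMap.toMatrix_apply, Matrix.of_apply]
    rw [hbl, hrepr, hsym]
    simp [LinearMap.restrict_apply]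
  have h21 : (LinearMap.toMatrix b b f).toBlocks₂₁ = 0 := by
    ext i j
    simp only [Matrix.toBlocks₂₁, LinearMap.toMatrix_apply, Matrix.of_apply, Matrix.zero_apply]
    rw [hbl, hrepr, hsym]
    simp
  have h22 : (LinearMap.toMatrix b b f).toBlocks₂₂ = LinearMap.toMatrix bq bq g := by
    ext i j
    simp only [Matrix.toBlocks₂₂, LinearMap.toMatrix_apply, Matrix.of_apply]
    rw [hbr, hrepr]
    have key : (e.symm (f (bq j : M))).2 = g (bq j) := by
      have h1 : g (bq j) = e' (Submodule.Quotient.mk (f (bq j : M))) := by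
        simp [hg, e', Submodule.mapQ_apply]
      have hx : ((e.symm (f (bq j : M))).1 : M) + ((e.symm (f (bq j : M))).2 : M)
          = f (bq j : M) := by
        have h2 := e.apply_symm_apply (f (bq j : M))
        rwa [Submodule.coe_prodEquivOfIsCompl'] at h2
      rw [h1]
      refine (e'.eq_symm_apply.1 ?_).symm
      rw [Submodule.quotientEquivOfIsCompl_symm_apply]
      have hz : (Submodule.Quotient.mk (((e.symm (f (bq j : M))).1 : M)) : M ⧸ p) = 0 :=
        (Submodule.Quotient.mk_eq_zero p).2 (e.symm (f (bq j : M))).1.2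
      conv_lhs => rw [← hx]
      rw [Submodule.Quotient.mk_add, hz, zero_add]
    rw [key]
    simp
  rw [← LinearMap.det_toMatrix b f, ← Matrix.fromBlocks_toBlocks (LinearMap.toMatrix b b f),
    h11, h21, h22, Matrix.det_fromBlocks_zero₂₁, LinearMap.det_toMatrix, LinearMap.det_toMatrix,
    hdetg]

private lemma stdBasis_repr' {F n : Type*} [Field F] [Fintype n] [DecidableEq n]
    (M : Matrix n n F) (ij : n × n) :
    (Matrix.stdBasis F n n).repr M ij = M ij.1 ij.2 := by
  simp [Matrix.stdBasis, Pi.basis_repr, Pi.basisFun_repr]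

private lemma det_mulRight_matrix' {F n : Type*} [Field F] [Fintype n] [DecidableEq n]
    (A : Matrix n n F) :
    LinearMap.det (LinearMap.mulRight F A) = A.det ^ Fintype.card n := by
  classical
  rw [← LinearMap.det_toMatrix (Matrix.stdBasis F n n)]
  have : LinearMap.toMatrix (Matrix.stdBasis F n n) (Matrix.stdBasis F n n)
      (LinearMap.mulRight F A) = (1 : Matrix n n F) ⊗ₖ Aᵀ := by
    ext ⟨i, j⟩ ⟨k, l⟩
    rw [LinearMap.toMatrix_apply, LinearMap.mulRight_apply,
      Matrix.stdBasis_eq_single, stdBasis_repr']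
    simp [Matrix.mul_apply, Matrix.single, Matrix.kroneckerMap_apply,
      Matrix.one_apply, ite_and, eq_comm]
  rw [this, Matrix.det_kronecker]
  simp

private lemma det_mulRight_end' {F V : Type*} [Field F] [AddCommGroup V] [Module F V]
    [FiniteDimensional F V] (γ : Module.End F V) :
    LinearMap.det (LinearMap.mulRight F γ) = LinearMap.det γ ^ finrank F V := by
  classical
  let b := finBasis F V
  let E := LinearMap.toMatrixAlgEquiv b
  have key : LinearMap.mulRight F (E γ)
      = (E.toLinearEquiv : Module.End F V →ₗ[F] Matrix (Fin (finrank F V)) (Fin (finrank F V)) F)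
          ∘ₗ LinearMap.mulRight F γ ∘ₗ
          (E.toLinearEquiv.symm :
            Matrix (Fin (finrank F V)) (Fin (finrank F V)) F →ₗ[F] Module.End F V) := by
    ext X
    simp [E, LinearMap.mulRight_apply, _root_.map_mul]
  have hconj := LinearMap.det_conj (LinearMap.mulRight F γ) E.toLinearEquiv
  rw [← key] at hconj
  rw [← hconj, det_mulRight_matrix', Fintype.card_fin]
  congr 1
  simp [E, LinearMap.toMatrixAlgEquiv, LinearMap.det_toMatrix]

set_option maxHeartbeats 1000000 in
set_option synthInstance.maxHeartbeats 400000 in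
private lemma det_restrict_mulRight_adjoin'
    {F V : Type*} [Field F] [AddCommGroup V] [Module F V] [FiniteDimensional F V]
    (γ : Module.End F V)
    (hdim : finrank F ↥(Algebra.adjoin F ({γ} : Set (Module.End F V))) = finrank F V)
    (h : ∀ x ∈ Subalgebra.toSubmodule (Algebra.adjoin F ({γ} : Set (Module.End F V))),
      (LinearMap.mulRight F γ) x
        ∈ Subalgebra.toSubmodule (Algebra.adjoin F ({γ} : Set (Module.End F V)))) :
    LinearMap.det ((LinearMap.mulRight F γ).restrict h) = LinearMap.det γ := by
  classical
  set A := Algebra.adjoin F ({γ} : Set (Module.End F V)) with hA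
  letI cr : CommRing ↥A :=
    Algebra.adjoinCommRingOfComm F (by
      rintro a ha b hb
      simp only [Set.mem_singleton_iff] at ha hb
      subst ha; subst hb; rfl)
  letI alg : @Algebra F ↥A _ (cr.toRing.toSemiring) := A.algebra
  set γ' : ↥A := ⟨γ, Algebra.self_mem_adjoin_singleton F γ⟩ with hγ'
  have hint : @IsIntegral F ↥A _ cr.toRing alg γ' := IsIntegral.of_finite F _
  let pb0 := @Algebra.adjoin.powerBasis F ↥A _ cr alg _ hint
  have htop : Algebra.adjoin F ({γ'} : Set ↥A) = ⊤ := by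
    apply Subalgebra.map_injective (f := A.val) Subtype.val_injective
    rw [AlgHom.map_adjoin, Algebra.map_top, Subalgebra.range_val]
    simp [hγ', hA]
  let pb : PowerBasis F ↥A :=
    pb0.map ((Subalgebra.equivOfEq _ ⊤ htop).trans Subalgebra.topEquiv)
  have hgen : pb.gen = γ' := by
    apply Subtype.ext
    show ((((Subalgebra.equivOfEq _ ⊤ htop).trans Subalgebra.topEquiv)) pb0.gen : Module.End F V)
      = γ
    rfl
  have hminpoly : minpoly F γ' = minpoly F γ := by
    have h2 := minpoly.algHom_eq A.val Subtype.val_injective γ'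
    exact h2.symm
  have hdimdeg : pb.dim = (minpoly F γ').natDegree := rfl
  have hdim' : pb.dim = finrank F V := by
    have h1 : finrank F ↥A = pb.dim := pb.finrank
    rw [← hdim]
    exact h1.symm
  have hdeg : (minpoly F γ).natDegree = finrank F V := by
    rw [← hminpoly, ← hdimdeg, hdim']
  have hchar : minpoly F γ = LinearMap.charpoly γ := by
    have hd := Polynomial.eq_of_monic_of_dvd_of_natDegree_le
      (minpoly.monic (IsIntegral.of_finite F γ)) (LinearMap.charpoly_monic γ)
      (LinearMap.minpoly_dvd_charpoly γ)
      (by rw [hdeg, LinearMap.charpoly_natDegree])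
    exact hd.symm
  have hnorm := Algebra.PowerBasis.norm_gen_eq_coeff_zero_minpoly pb
  rw [hgen, hminpoly, hdim'] at hnorm
  have hle : A ≤ Subalgebra.centralizer F ({γ} : Set (Module.End F V)) :=
    Algebra.adjoin_le (fun x hx => by
      simp only [Set.mem_singleton_iff] at hx
      subst hx
      exact (Subalgebra.mem_centralizer_iff F).2 (fun g hg => by
        simp only [Set.mem_singleton_iff] at hg
        subst hg; rfl))
  have hr : (LinearMap.mulRight F γ).restrict h = (Algebra.lmul F ↥A) γ' := by
    refine LinearMap.ext fun x => Subtype.ext ?_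
    show (x : Module.End F V) * γ = γ * (x : Module.End F V)
    exact ((Subalgebra.mem_centralizer_iff F).1 (hle x.2) γ rfl).symm
  rw [hr]
  have hn : LinearMap.det ((Algebra.lmul F ↥A) γ') = Algebra.norm F γ' := rfl
  exact hn.trans (by rw [hnorm, hchar, LinearMap.det_eq_sign_charpoly_coeff])

end Aux

/-- Let `F` be a field, `V` an `F`-vector space of dimension `N > 1`,
`𝔤 = End_F(V)`, and `γ ∈ Aut_F(V)` a quasi-regular element, i.e. the centralizer `𝔤_γ`
equals `F[γ]` and has dimension `N` over `F`.  Then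
`det_F(-ad_γ ; 𝔤/𝔤_γ) = det(γ)^{N-1} · det_F(1 - Ad_γ ; 𝔤/𝔤_γ)`, where
`ad_γ(x) = γx - xγ`, `Ad_γ(x) = γxγ⁻¹` and `det (γ) = det_F(v ↦ γv ; V)`. -/
theorem statement18
    (F V : Type*) [Field F] [AddCommGroup V] [Module F V] [FiniteDimensional F V]
    (hN : 1 < Module.finrank F V)
    (γ : Module.End F V) (hγ : IsUnit γ)
    -- `γ` is quasi-regular: `𝔤_γ = F[γ]` and `dim_F 𝔤_γ = N`:
    (hqr : Subalgebra.centralizer F ({γ} : Set (Module.End F V)) = Algebra.adjoin F {γ})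
    (hdim : Module.finrank F ↥(Subalgebra.centralizer F ({γ} : Set (Module.End F V)))
      = Module.finrank F V)
    (C : Submodule F (Module.End F V))
    (hC : C = Subalgebra.toSubmodule (Subalgebra.centralizer F ({γ} : Set (Module.End F V))))
    (h₁ : C ≤ C.comap (-(LinearMap.mulLeft F γ - LinearMap.mulRight F γ)))
    (h₂ : C ≤ C.comap
      ((LinearMap.id : Module.End F V →ₗ[F] Module.End F V)
        - (LinearMap.mulLeft F γ).comp
            (LinearMap.mulRight F ((hγ.unit⁻¹ : (Module.End F V)ˣ) : Module.End F V)))) :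
    LinearMap.det
        (Submodule.mapQ C C (-(LinearMap.mulLeft F γ - LinearMap.mulRight F γ)) h₁)
      = (LinearMap.det γ) ^ (Module.finrank F V - 1)
          * LinearMap.det (Submodule.mapQ C C
              ((LinearMap.id : Module.End F V →ₗ[F] Module.End F V)
                - (LinearMap.mulLeft F γ).comp
                    (LinearMap.mulRight F ((hγ.unit⁻¹ : (Module.End F V)ˣ) : Module.End F V)))
              h₂) := by
  classical
  rw [hqr] at hC hdim
  subst hC
  set N := Module.finrank F V with hNdef
  set γinv : Module.End F V := ((hγ.unit⁻¹ : (Module.End F V)ˣ) : Module.End F V) with hγinv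
  set Ad1 : Module.End F V →ₗ[F] Module.End F V :=
    (LinearMap.id : Module.End F V →ₗ[F] Module.End F V)
      - (LinearMap.mulLeft F γ).comp (LinearMap.mulRight F γinv) with hAd1
  set T := Subalgebra.toSubmodule (Algebra.adjoin F ({γ} : Set (Module.End F V))) with hT
  have hinv : γinv * γ = 1 := by
    rw [hγinv]
    exact hγ.val_inv_mul
  have hfactor : -(LinearMap.mulLeft F γ - LinearMap.mulRight F γ)
      = (LinearMap.mulRight F γ).comp Ad1 := by
    refine LinearMap.ext fun x => ?_
    simp only [LinearMap.neg_apply, LinearMap.sub_apply, LinearMap.mulLeft_apply,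
      LinearMap.mulRight_apply, LinearMap.comp_apply, LinearMap.id_apply, hAd1]
    rw [sub_mul, mul_assoc γ (x * γinv) γ, mul_assoc x γinv γ, hinv, mul_one, neg_sub]
  have hRmem : ∀ x ∈ T, (LinearMap.mulRight F γ) x ∈ T := by
    intro x hx
    rw [hT, Subalgebra.mem_toSubmodule] at hx ⊢
    exact mul_mem hx (Algebra.self_mem_adjoin_singleton F γ)
  have hAdmem : ∀ x ∈ T, Ad1 x ∈ T := fun x hx => h₂ hx
  have hsplit : Submodule.mapQ T T (-(LinearMap.mulLeft F γ - LinearMap.mulRight F γ)) h₁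
      = (Submodule.mapQ T T (LinearMap.mulRight F γ) (fun x hx => hRmem x hx)).comp
          (Submodule.mapQ T T Ad1 h₂) := by
    refine Submodule.linearMap_qext _ ?_
    refine LinearMap.ext fun x => ?_
    simp only [LinearMap.comp_apply, Submodule.mkQ_apply, Submodule.mapQ_apply]
    rw [hfactor]
    rfl
  rw [hsplit, LinearMap.det_comp]
  have lA := det_restrict_mul_det_mapQ' T (LinearMap.mulRight F γ) hRmem
  rw [det_mulRight_end' γ, det_restrict_mulRight_adjoin' γ hdim hRmem] at lA
  have hdetne : LinearMap.det γ ≠ 0 := (LinearMap.isUnit_det γ hγ).ne_zero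
  have hpow : LinearMap.det γ ^ N = LinearMap.det γ * LinearMap.det γ ^ (N - 1) := by
    rw [← pow_succ']
    congr 1
    omega
  rw [hpow] at lA
  have hQ : LinearMap.det
      (Submodule.mapQ T T (LinearMap.mulRight F γ) (fun x hx => hRmem x hx))
      = LinearMap.det γ ^ (N - 1) := mul_left_cancel₀ hdetne lA.symm
  rw [hQ]
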